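/- Let A be a unital JB-algebra, a, b ∈ A₊°, and define γ(t) := U_{a^{1/2}}((U_{a^{-1/2}} b)^t) for t ∈ [0,1]. Then γ(0) = a, γ(1) = b, and d_T(γ(s), γ(t)) = |s-t|·d_T(a,b) for all s, t ∈ [0,1]; that is, γ is a geodesic path for Thompson's metric connecting a and b. -/

import Mathlib

noncomputable section

variable {A : Type*} [CStarAlgebra A] [PartialOrder A] [StarOrderedRing A]

/-- `M(a/b) = inf {l > 0 : a ≤ l b}`. -/
def Mrel (a b : A) : ℝ := sInf {l : ℝ | 0 < l ∧ a ≤ l • b}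

/-- Thompson's metric. -/
def dT (a b : A) : ℝ := Real.log (max (Mrel a b) (Mrel b a))

/-- Hilbert's metric. -/
def dH (a b : A) : ℝ := Real.log (Mrel a b * Mrel b a)

/-- The variation seminorm `max σ(a) - min σ(a)`. -/
def vnorm (a : A) : ℝ := sSup (spectrum ℝ a) - sInf (spectrum ℝ a)

/-- The path `γ(t) = U_{a^{1/2}} ((U_{a^{-1/2}} b)^t)`. -/
def gpath (a b : A) (t : ℝ) : A :=
  cfc Real.sqrt a *
    cfc (fun x : ℝ => x ^ t)
      (cfc (fun x : ℝ => (Real.sqrt x)⁻¹) a * b * cfc (fun x : ℝ => (Real.sqrt x)⁻¹) a) *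
    cfc Real.sqrt a

namespace Stmt12Aux

/-- `M^u` if `u ≥ 0`, else `m^u`. -/
def sval (m M u : ℝ) : ℝ := if 0 ≤ u then M ^ u else m ^ u

lemma sval_pos {m M : ℝ} (hm : 0 < m) (hM : 0 < M) (u : ℝ) : 0 < sval m M u := by
  unfold sval; split
  · exact Real.rpow_pos_of_pos hM u
  · exact Real.rpow_pos_of_pos hm u

lemma rpow_le_sval {m M x u : ℝ} (hm : 0 < m) (hxm : m ≤ x) (hxM : x ≤ M) :
    x ^ u ≤ sval m M u := by
  unfold sval; split
  · next h => exact Real.rpow_le_rpow (hm.trans_le hxm).le hxM h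
  · next h => exact Real.rpow_le_rpow_of_nonpos hm hxm (le_of_not_ge h)

lemma sval_neg_of_nonneg {m M u : ℝ} (hm : 0 < m) (hu : 0 ≤ u) :
    sval m M (-u) = (m⁻¹) ^ u := by
  rcases eq_or_lt_of_le hu with rfl | hu'
  · simp [sval]
  · rw [sval, if_neg (by linarith), Real.rpow_neg hm.le, ← Real.inv_rpow hm.le]

lemma sval_of_nonneg {m M u : ℝ} (hu : 0 ≤ u) : sval m M u = M ^ u := if_pos hu

lemma sval_max_log {m M : ℝ} (hm : 0 < m) (hM : 0 < M) (u : ℝ) :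
    Real.log (max (sval m M u) (sval m M (-u))) = |u| * Real.log (max M m⁻¹) := by
  have key : ∀ v : ℝ, 0 ≤ v →
      max (sval m M v) (sval m M (-v)) = (max M m⁻¹) ^ v := by
    intro v hv
    rw [sval_of_nonneg hv, sval_neg_of_nonneg hm hv]
    rcases le_total M m⁻¹ with h | h
    · rw [max_eq_right (Real.rpow_le_rpow hM.le h hv), max_eq_right h]
    · rw [max_eq_left (Real.rpow_le_rpow (by positivity) h hv), max_eq_left h]
  have hK : 0 < max M m⁻¹ := lt_max_of_lt_left hM
  rcases le_total 0 u with hu | hu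
  · rw [key u hu, Real.log_rpow hK, abs_of_nonneg hu]
  · have h := key (-u) (by linarith)
    rw [neg_neg] at h
    rw [max_comm, h, Real.log_rpow hK, abs_of_nonpos hu]

lemma Mrel_eq {A : Type*} [CStarAlgebra A] [PartialOrder A] [StarOrderedRing A]
    {x y : A} (K : ℝ) (hK : 0 < K) (h : ∀ l : ℝ, x ≤ l • y ↔ K ≤ l) : Mrel x y = K := by
  unfold Mrel
  have hset : {l : ℝ | 0 < l ∧ x ≤ l • y} = Set.Ici K := by
    ext l
    simp only [Set.mem_setOf_eq, h, Set.mem_Ici]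
    exact ⟨fun h => h.2, fun h => ⟨hK.trans_le h, h⟩⟩
  rw [hset, csInf_Ici]

lemma conj_le_conj_iff {A : Type*} [CStarAlgebra A] [PartialOrder A] [StarOrderedRing A]
    {q q' : A} (hq : IsSelfAdjoint q) (hq' : IsSelfAdjoint q')
    (h1 : q' * q = 1) (h2 : q * q' = 1) (x y : A) :
    q * x * q ≤ q * y * q ↔ x ≤ y := by
  have key : ∀ z : A, q' * (q * z * q) * q' = z := by
    intro z
    calc q' * (q * z * q) * q' = (q' * q) * z * (q * q') := by simp only [mul_assoc]
      _ = z := by rw [h1, h2, one_mul, mul_one]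
  constructor
  · intro h
    have h3 := star_left_conjugate_le_conjugate h q'
    rwa [hq'.star_eq, key, key] at h3
  · intro h
    have h3 := star_left_conjugate_le_conjugate h q
    rwa [hq.star_eq] at h3

end Stmt12Aux

open Stmt12Aux in
/-- `γ` is a geodesic path for Thompson's metric connecting `a` and `b`. -/
theorem stmt12 (a b : A) (ha0 : 0 ≤ a) (hau : IsUnit a) (hb0 : 0 ≤ b) (hbu : IsUnit b) :
    gpath a b 0 = a ∧ gpath a b 1 = b ∧
    ∀ s t : ℝ, s ∈ Set.Icc (0 : ℝ) 1 → t ∈ Set.Icc (0 : ℝ) 1 →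
      dT (gpath a b s) (gpath a b t) = |s - t| * dT a b := by
  rcases subsingleton_or_nontrivial A with hA | hA
  · -- trivial algebra
    have hd : ∀ x y : A, dT x y = 0 := by
      intro x y
      have hle : ∀ z w : A, z ≤ w := fun z w => le_of_eq (Subsingleton.elim z w)
      have hset : ∀ z w : A, {l : ℝ | 0 < l ∧ z ≤ l • w} = Set.Ioi 0 := by
        intro z w; ext l; simp [hle]
      unfold dT Mrel
      rw [hset, hset, csInf_Ioi, max_self, Real.log_zero]
    exact ⟨Subsingleton.elim _ _, Subsingleton.elim _ _,
      fun s t _ _ => by rw [hd, hd, mul_zero]⟩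
  · -- nontrivial algebra
    have ha' : IsSelfAdjoint a := .of_nonneg ha0
    have haS : ∀ x ∈ spectrum ℝ a, 0 < x := by
      intro x hx
      rcases lt_or_eq_of_le (spectrum_nonneg_of_nonneg ha0 hx) with h | h
      · exact h
      · exact absurd (h ▸ hx) ((spectrum.zero_notMem_iff ℝ).mpr hau)
    set q : A := cfc Real.sqrt a with hq_def
    set q' : A := cfc (fun x : ℝ => (Real.sqrt x)⁻¹) a with hq'_def
    have hcont_sqrt : ContinuousOn Real.sqrt (spectrum ℝ a) :=
      Real.continuous_sqrt.continuousOn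
    have hcont_inv : ContinuousOn (fun x : ℝ => (Real.sqrt x)⁻¹) (spectrum ℝ a) :=
      hcont_sqrt.inv₀ fun x hx => Real.sqrt_ne_zero'.mpr (haS x hx)
    have hq : IsSelfAdjoint q := cfc_predicate _ a
    have hq' : IsSelfAdjoint q' := cfc_predicate _ a
    have hq'q : q' * q = 1 := by
      rw [hq_def, hq'_def, ← cfc_mul _ _ a hcont_inv hcont_sqrt]
      rw [cfc_congr (g := fun _ : ℝ => (1 : ℝ))
        (fun x hx => inv_mul_cancel₀ (Real.sqrt_ne_zero'.mpr (haS x hx)))]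
      exact cfc_one ℝ a ha'
    have hqq' : q * q' = 1 := by
      rw [hq_def, hq'_def, ← cfc_mul _ _ a hcont_sqrt hcont_inv]
      rw [cfc_congr (g := fun _ : ℝ => (1 : ℝ))
        (fun x hx => mul_inv_cancel₀ (Real.sqrt_ne_zero'.mpr (haS x hx)))]
      exact cfc_one ℝ a ha'
    set c : A := q' * b * q' with hc_def
    have hc0 : 0 ≤ c := by
      have := star_right_conjugate_nonneg hb0 q'
      rwa [hq'.star_eq] at this
    have hc : IsSelfAdjoint c := .of_nonneg hc0
    have hq'u : IsUnit q' := isUnit_iff_exists.mpr ⟨q, hq'q, hqq'⟩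
    have hcu : IsUnit c := (hq'u.mul hbu).mul hq'u
    have hcS : ∀ x ∈ spectrum ℝ c, 0 < x := by
      intro x hx
      rcases lt_or_eq_of_le (spectrum_nonneg_of_nonneg hc0 hx) with h | h
      · exact h
      · exact absurd (h ▸ hx) ((spectrum.zero_notMem_iff ℝ).mpr hcu)
    have hrpow : ∀ t : ℝ, ContinuousOn (fun x : ℝ => x ^ t) (spectrum ℝ c) :=
      fun t x hx =>
        (Real.continuousAt_rpow_const x t (Or.inl (hcS x hx).ne')).continuousWithinAt
    -- spectral boundary values
    set m : ℝ := sInf (spectrum ℝ c) with hm_def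
    set M : ℝ := sSup (spectrum ℝ c) with hM_def
    have hSne : (spectrum ℝ c).Nonempty := hc.spectrum_nonempty
    have hScomp : IsCompact (spectrum ℝ c) := spectrum.isCompact c
    have hm_mem : m ∈ spectrum ℝ c := hScomp.sInf_mem hSne
    have hM_mem : M ∈ spectrum ℝ c := hScomp.sSup_mem hSne
    have hm : 0 < m := hcS m hm_mem
    have hM : 0 < M := hcS M hM_mem
    -- the path, rewritten
    have hg : ∀ s : ℝ, gpath a b s = q * cfc (fun x : ℝ => x ^ s) c * q := fun s => rfl
    -- endpoints
    have h0 : gpath a b 0 = a := by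
      rw [hg 0, cfc_congr (g := (1 : ℝ → ℝ)) (fun x _ => Real.rpow_zero x),
        cfc_one ℝ c hc, mul_one, hq_def, ← cfc_mul _ _ a hcont_sqrt hcont_sqrt,
        cfc_congr (g := fun x : ℝ => x) (fun x hx => Real.mul_self_sqrt (haS x hx).le),
        cfc_id' ℝ a ha']
    have h1 : gpath a b 1 = b := by
      rw [hg 1, cfc_congr (g := fun x : ℝ => x) (fun x _ => Real.rpow_one x),
        cfc_id' ℝ c hc, hc_def]
      calc q * (q' * b * q') * q = (q * q') * b * (q' * q) := by simp only [mul_assoc]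
        _ = b := by rw [hqq', hq'q, one_mul, mul_one]
    -- Mrel along the path
    have key : ∀ s t : ℝ, Mrel (gpath a b s) (gpath a b t) = sval m M (s - t) := by
      intro s t
      apply Mrel_eq _ (sval_pos hm hM _)
      intro l
      rw [hg s, hg t,
        show l • (q * cfc (fun x : ℝ => x ^ t) c * q)
            = q * (l • cfc (fun x : ℝ => x ^ t) c) * q by
          rw [mul_smul_comm, smul_mul_assoc],
        conj_le_conj_iff hq hq' hq'q hqq',
        ← cfc_const_mul l (fun x : ℝ => x ^ t) c (hrpow t),
        cfc_le_iff _ (fun x : ℝ => l * x ^ t) c (hrpow s) (continuousOn_const.mul (hrpow t)) hc]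
      have hpt : ∀ x ∈ spectrum ℝ c, (x ^ s ≤ l * x ^ t ↔ x ^ (s - t) ≤ l) := by
        intro x hx
        have hx0 := hcS x hx
        constructor
        · intro hle
          have h2 : x ^ (s - t) * x ^ t ≤ l * x ^ t := by
            rw [← Real.rpow_add hx0, sub_add_cancel]; exact hle
          exact le_of_mul_le_mul_right h2 (Real.rpow_pos_of_pos hx0 t)
        · intro hle
          have h2 := mul_le_mul_of_nonneg_right hle (Real.rpow_nonneg hx0.le t)
          rwa [← Real.rpow_add hx0, sub_add_cancel] at h2
      constructor
      · intro h
        by_cases hu : 0 ≤ s - t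
        · have := (hpt M hM_mem).mp (h M hM_mem)
          rwa [sval_of_nonneg hu]
        · have := (hpt m hm_mem).mp (h m hm_mem)
          rwa [sval, if_neg hu]
      · intro h x hx
        refine (hpt x hx).mpr (le_trans ?_ h)
        exact rpow_le_sval hm (csInf_le hScomp.bddBelow hx) (le_csSup hScomp.bddAbove hx)
    -- the distance formula
    have hW : ∀ s t : ℝ, dT (gpath a b s) (gpath a b t)
        = |s - t| * Real.log (max M m⁻¹) := by
      intro s t
      rw [dT, key s t, key t s, show t - s = -(s - t) by ring, sval_max_log hm hM]
    have hab : dT a b = Real.log (max M m⁻¹) := by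
      have h := hW 0 1
      rw [h0, h1] at h
      rw [h]
      norm_num
    refine ⟨h0, h1, fun s t _ _ => ?_⟩
    rw [hW s t, hab]
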